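/- Let Ω₁, Ω₂ be r.e. infinite sets, P₁ ∈ 𝕡(Ω₁), P₂ ∈ 𝕡(Ω₂), α₁ ∈ Ω₁^∞, α₂ ∈ Ω₂^∞. If α₁ × α₂ is Martin-Löf (P₁ × P₂)-random relative to oracles β₁,…,β_ℓ, then α₂ is Martin-Löf P₂-random relative to β₁,…,β_ℓ. (The marginal of a relatively random pair is relatively random; no computability assumption on P₁ or P₂ is needed for this direction.) -/

import Mathlib

open scoped ENNReal

/-- A set of finite strings is prefix-free. -/
def prefixFree {Γ : Type*} (E : Set (List Γ)) : Prop :=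
  ∀ σ ∈ E, ∀ τ ∈ E, σ <+: τ → σ = τ

/-- The prefix of length `n` of an infinite sequence. -/
def pre {Γ : Type*} (α : ℕ → Γ) (n : ℕ) : List Γ := List.ofFn fun i : Fin n => α i

/-- The open set generated by a set of strings: sequences having some prefix in `S`. -/
def cyl {Γ : Type*} (S : Set (List Γ)) : Set (ℕ → Γ) := {α | ∃ n, pre α n ∈ S}

/-- The (generalized) Bernoulli probability of a finite string:
`P(σ₁)···P(σₙ)`. -/
def strP {Γ : Type*} (P : Γ → ℝ) (σ : List Γ) : ℝ := (σ.map P).prod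

/-- The `λ_P`-measure of the open set generated by a prefix-free set `S`. -/
noncomputable def mOpen {Γ : Type*} (P : Γ → ℝ) (S : Set (List Γ)) : ℝ≥0∞ :=
  ∑' σ : S, ENNReal.ofReal (strP P (σ : List Γ))

/-- All symbols of the string belong to the alphabet `O`. -/
def strIn {Γ : Type*} (O : Set Γ) (σ : List Γ) : Prop := ∀ a ∈ σ, a ∈ O

/-- All symbols of the sequence belong to the alphabet `O`. -/
def seqIn {Γ : Type*} (O : Set Γ) (α : ℕ → Γ) : Prop := ∀ n, α n ∈ O

/-- `P` is a discrete probability space on the alphabet `O`. -/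
def isProb {Γ : Type*} (O : Set Γ) (P : Γ → ℝ) : Prop :=
  (∀ a ∈ O, 0 ≤ P a) ∧ HasSum (fun a : O => P (a : Γ)) 1

/-- The combinatorial conditions on a Martin-Löf `P`-test: sections consist of strings
over the alphabet, are prefix-free, and have `λ_P`-measure `< 2⁻ⁿ`. -/
def isTestSet {Γ : Type*} (O : Set Γ) (P : Γ → ℝ) (C : Set (ℕ × List Γ)) : Prop :=
  (∀ x ∈ C, strIn O x.2) ∧
  ∀ n : ℕ, 1 ≤ n → prefixFree {σ | (n, σ) ∈ C} ∧
    mOpen P {σ | (n, σ) ∈ C} < (2 : ℝ≥0∞)⁻¹ ^ n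

/-- A Martin-Löf `P`-test: an r.e. subset of `ℕ⁺ × Ω*` satisfying the test conditions. -/
def MLTest {Γ : Type*} [Primcodable Γ] (O : Set Γ) (P : Γ → ℝ)
    (C : Set (ℕ × List Γ)) : Prop :=
  REPred (· ∈ C) ∧ isTestSet O P C

/-- `α` is Martin-Löf `P`-random: it passes every Martin-Löf `P`-test. -/
def MLRandom {Γ : Type*} [Primcodable Γ] (O : Set Γ) (P : Γ → ℝ) (α : ℕ → Γ) : Prop :=
  ∀ C : Set (ℕ × List Γ), MLTest O P C → ∃ n, 1 ≤ n ∧ α ∉ cyl {σ | (n, σ) ∈ C}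

/-- Partial recursiveness relative to an oracle `O : ℕ → ℕ`, mirroring `Nat.Partrec`
with an additional base case for the oracle. -/
inductive RecIn (O : ℕ → ℕ) : (ℕ →. ℕ) → Prop
  | oracle : RecIn O fun n => Part.some (O n)
  | zero : RecIn O (pure 0)
  | succ : RecIn O fun n => Part.some (n + 1)
  | left : RecIn O fun n => Part.some (Nat.unpair n).1
  | right : RecIn O fun n => Part.some (Nat.unpair n).2
  | pair {f g} : RecIn O f → RecIn O g → RecIn O fun n => Nat.pair <$> f n <*> g n
  | comp {f g} : RecIn O f → RecIn O g → RecIn O fun n => g n >>= f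
  | prec {f g} : RecIn O f → RecIn O g → RecIn O (Nat.unpaired fun a n =>
      n.rec (f a) fun y IH => do let i ← IH; g (Nat.pair a (Nat.pair y i)))
  | rfind {f} : RecIn O f →
      RecIn O fun a => Nat.rfind fun n => (fun m => decide (m = 0)) <$> f (Nat.pair a n)

/-- A set (of encodable elements) is r.e. relative to the oracle `O`. -/
def REIn {β : Type*} [Primcodable β] (O : ℕ → ℕ) (C : Set β) : Prop :=
  ∃ f : ℕ →. ℕ, RecIn O f ∧ ∀ x : β, x ∈ C ↔ (f (Encodable.encode x)).Dom

/-- Combine finitely many oracle sequences into a single oracle via pairing. -/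
def combineOracles {ℓ : ℕ} (β : Fin ℓ → ℕ → ℕ) : ℕ → ℕ := fun n =>
  if h : n.unpair.1 < ℓ then β ⟨n.unpair.1, h⟩ n.unpair.2 else 0

/-- A Martin-Löf `P`-test relative to the oracle `O`. -/
def MLTestRel {Γ : Type*} [Primcodable Γ] (Alph : Set Γ) (P : Γ → ℝ) (O : ℕ → ℕ)
    (C : Set (ℕ × List Γ)) : Prop :=
  REIn O C ∧ isTestSet Alph P C

/-- `α` is Martin-Löf `P`-random relative to the oracle `O`. -/
def MLRandomRel {Γ : Type*} [Primcodable Γ] (Alph : Set Γ) (P : Γ → ℝ) (O : ℕ → ℕ)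
    (α : ℕ → Γ) : Prop :=
  ∀ C : Set (ℕ × List Γ), MLTestRel Alph P O C → ∃ n, 1 ≤ n ∧ α ∉ cyl {σ | (n, σ) ∈ C}

theorem recIn_of_partrec {O : ℕ → ℕ} {f : ℕ →. ℕ} (h : Nat.Partrec f) : RecIn O f := by
  induction h with
  | zero => exact RecIn.zero
  | succ => exact RecIn.succ
  | left => exact RecIn.left
  | right => exact RecIn.right
  | pair _ _ pf pg => exact RecIn.pair pf pg
  | comp _ _ pf pg => exact RecIn.comp pf pg
  | prec _ _ pf pg => exact RecIn.prec pf pg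
  | rfind _ pf => exact RecIn.rfind pf

theorem recIn_of_eq {O : ℕ → ℕ} {f g : ℕ →. ℕ} (h : RecIn O f) (H : ∀ n, f n = g n) :
    RecIn O g := (funext H : f = g) ▸ h

theorem rein_of_re {β : Type*} [Primcodable β] {O : ℕ → ℕ} {p : β → Prop}
    (hp : REPred p) : REIn O {x | p x} := by
  refine ⟨_, recIn_of_partrec hp, fun x => ?_⟩
  simp only [Set.mem_setOf_eq, Encodable.encodek, Part.coe_some, Part.bind_eq_bind,
    Part.bind_some]
  exact ⟨fun h => ⟨h, trivial⟩, fun h => h.elim fun hp _ => hp⟩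

theorem rein_comp {β γ : Type*} [Primcodable β] [Primcodable γ] {O : ℕ → ℕ}
    {C : Set γ} (hC : REIn O C) {h : β → γ} (hh : Computable h) :
    REIn O {x | h x ∈ C} := by
  obtain ⟨f, hf, hfd⟩ := hC
  have hg : Nat.Partrec fun n => Part.bind (Encodable.decode (α := β) n)
      fun a => Part.some (Encodable.encode (h a)) := by
    refine Nat.Partrec.of_eq hh fun n => ?_
    simp [Part.bind]
  refine ⟨fun n => (Part.bind (Encodable.decode (α := β) n)
      fun a => Part.some (Encodable.encode (h a))) >>= f,
    RecIn.comp hf (recIn_of_partrec hg), fun x => ?_⟩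
  simp [Encodable.encodek, hfd (h x)]
  rw [show Part.some (Encodable.encode (h x)) >>= f = f (Encodable.encode (h x)) from
    Part.bind_some _ f]

theorem rein_inter {β : Type*} [Primcodable β] {O : ℕ → ℕ} {A B : Set β}
    (hA : REIn O A) (hB : REIn O B) : REIn O (A ∩ B) := by
  obtain ⟨f, hf, hfd⟩ := hA
  obtain ⟨g, hg, hgd⟩ := hB
  have hid : RecIn O fun n => Part.some n :=
    recIn_of_partrec (Nat.Partrec.of_primrec Nat.Primrec.id)
  have h2 : RecIn O fun m => g m.unpair.2 := by
    refine recIn_of_eq (RecIn.comp hg RecIn.right) fun n => ?_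
    exact Part.bind_some _ _
  refine ⟨fun n => (Nat.pair <$> f n <*> Part.some n) >>= fun m => g m.unpair.2,
    RecIn.comp h2 (RecIn.pair hf hid), fun x => ?_⟩
  rw [Set.mem_inter_iff, hfd x, hgd x]
  set n := Encodable.encode x with hn
  have hval : ∀ (hh : (Nat.pair <$> f n <*> Part.some n).Dom),
      (Nat.unpair ((Nat.pair <$> f n <*> Part.some n).get hh)).2 = n := by
    intro hh
    have hmem := Part.get_mem hh
    simp only [Seq.seq, Part.mem_bind_iff, Part.mem_map_iff, Part.mem_some_iff,
      Part.bind_eq_bind, Part.map_eq_map] at hmem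
    obtain ⟨F, ⟨a, -, rfl⟩, b, rfl, hb⟩ := hmem
    simp only [Seq.seq, Part.bind_eq_bind, Part.map_eq_map]
    rw [← hb]
    simp
  have hdom : (Nat.pair <$> f n <*> Part.some n).Dom ↔ (f n).Dom := by
    simp [Seq.seq, Part.bind_dom]
  show _ ↔ ((Nat.pair <$> f n <*> Part.some n) >>= fun m => g (Nat.unpair m).2).Dom
  rw [Part.bind_eq_bind, Part.bind_dom]
  constructor
  · rintro ⟨h1, h2⟩
    refine ⟨hdom.2 h1, ?_⟩
    rwa [hval _]
  · rintro ⟨h, h2⟩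
    rw [hval h] at h2
    exact ⟨hdom.1 h, h2⟩

theorem rePred_comp {β γ : Type*} [Primcodable β] [Primcodable γ] {p : γ → Prop}
    (hp : REPred p) {h : β → γ} (hh : Computable h) : REPred fun x => p (h x) :=
  Partrec.comp hp hh

open Nat.Partrec.Code in
theorem rePred_list_forall {p : ℕ → Prop} (hp : REPred p) :
    REPred fun l : List ℕ => ∀ a ∈ l, p a := by
  have hf : Nat.Partrec fun n => (Part.assert (p n) fun _ => Part.some ()).map fun _ => 0 :=
    Partrec.nat_iff.1 (Partrec.map hp ((Computable.const 0).comp Computable.fst).to₂)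
  obtain ⟨c, hc⟩ := exists_code.1 hf
  have key : ∀ a : ℕ, p a ↔ ∃ k, (evaln k c a).isSome = true := by
    intro a
    have h1 : p a ↔ (eval c a).Dom := by
      rw [hc]
      simp [Part.dom_iff_mem]
    rw [h1, Part.dom_iff_mem]
    constructor
    · rintro ⟨x, hx⟩
      obtain ⟨k, hk⟩ := evaln_complete.1 hx
      exact ⟨k, Option.isSome_iff_exists.2 ⟨x, hk⟩⟩
    · rintro ⟨k, hk⟩
      obtain ⟨x, hx⟩ := Option.isSome_iff_exists.1 hk
      exact ⟨x, evaln_sound hx⟩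
  set B : List ℕ → ℕ → Bool := fun l k =>
    l.foldr (fun a r => (evaln k c a).isSome && r) true with hB
  have hmono : ∀ (l : List ℕ) {k k' : ℕ}, k ≤ k' → B l k = true → B l k' = true := by
    intro l k k' hkk
    induction l with
    | nil => simp [hB]
    | cons a l ih =>
      simp only [hB, List.foldr_cons, Bool.and_eq_true]
      rintro ⟨h1, h2⟩
      obtain ⟨x, hx⟩ := Option.isSome_iff_exists.1 h1
      exact ⟨Option.isSome_iff_exists.2 ⟨x, evaln_mono hkk hx⟩, ih h2⟩
  have hiff : ∀ l : List ℕ, (∀ a ∈ l, p a) ↔ ∃ k, B l k = true := by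
    intro l
    induction l with
    | nil => simp [hB]
    | cons a l ih =>
      simp only [List.mem_cons, forall_eq_or_imp, hB, List.foldr_cons, Bool.and_eq_true]
      constructor
      · rintro ⟨h1, h2⟩
        obtain ⟨k1, hk1⟩ := (key a).1 h1
        obtain ⟨k2, hk2⟩ := ih.1 h2
        refine ⟨max k1 k2, ?_, hmono l (le_max_right _ _) hk2⟩
        obtain ⟨x, hx⟩ := Option.isSome_iff_exists.1 hk1
        exact Option.isSome_iff_exists.2 ⟨x, evaln_mono (le_max_left _ _) hx⟩
      · rintro ⟨k, h1, h2⟩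
        exact ⟨(key a).2 ⟨k, h1⟩, ih.2 ⟨k, h2⟩⟩
  have hcomp : Computable₂ B := by
    have hh : Primrec₂ fun (x : List ℕ × ℕ) (y : ℕ × Bool) =>
        (evaln x.2 c y.1).isSome && y.2 := by
      have h1 : Primrec fun q : (List ℕ × ℕ) × (ℕ × Bool) => (evaln q.1.2 c q.2.1).isSome :=
        Primrec.option_isSome.comp (primrec_evaln.comp
          (((Primrec.snd.comp Primrec.fst).pair (Primrec.const c)).pair
            (Primrec.fst.comp Primrec.snd)))
      have h2 : Primrec fun q : (List ℕ × ℕ) × (ℕ × Bool) => q.2.2 :=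
        Primrec.snd.comp Primrec.snd
      show Primrec fun q : (List ℕ × ℕ) × (ℕ × Bool) => (evaln q.1.2 c q.2.1).isSome && q.2.2
      refine (Primrec.cond h1 h2 (Primrec.const false)).of_eq fun q => ?_
      cases h : (evaln q.1.2 c q.2.1).isSome <;> simp [h]
    have hprim : Primrec fun x : List ℕ × ℕ =>
        x.1.foldr (fun a r => (evaln x.2 c a).isSome && r) true :=
      Primrec.list_foldr Primrec.fst (Primrec.const true) hh
    exact Primrec₂.to_comp hprim
  have hrf : Partrec fun l : List ℕ => Nat.rfind fun k => Part.some (B l k) :=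
    Partrec.rfind hcomp.partrec₂
  refine hrf.dom_re.of_eq fun l => ?_
  refine Nat.rfind_dom.trans ?_
  simp only [Part.mem_some_iff, Part.some_dom]
  rw [hiff l]
  exact (exists_congr fun k => ⟨fun h => ⟨h.symm, fun _ => trivial⟩, fun h => h.1.symm⟩).symm

theorem strP_nil {Γ : Type*} (P : Γ → ℝ) : strP P [] = 1 := rfl

theorem strP_cons {Γ : Type*} (P : Γ → ℝ) (a : Γ) (l : List Γ) :
    strP P (a :: l) = P a * strP P l := by simp [strP]

theorem strP_nonneg {Γ : Type*} {O : Set Γ} {P : Γ → ℝ} (hP : ∀ a ∈ O, 0 ≤ P a) :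
    ∀ {l : List Γ}, strIn O l → 0 ≤ strP P l
  | [], _ => by rw [strP_nil]; norm_num
  | a :: l, h => by
    rw [strP_cons]
    exact mul_nonneg (hP a (h a (List.mem_cons_self)))
      (strP_nonneg hP fun b hb => h b (List.mem_cons_of_mem _ hb))

theorem strP_prod {Γ₁ Γ₂ : Type*} (P₁ : Γ₁ → ℝ) (P₂ : Γ₂ → ℝ) (τ : List (Γ₁ × Γ₂)) :
    strP (fun p => P₁ p.1 * P₂ p.2) τ =
      strP P₁ (τ.map Prod.fst) * strP P₂ (τ.map Prod.snd) := by
  simp [strP, List.map_map, Function.comp_def, List.prod_map_mul]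

theorem tsum_omega {Ω : Set ℕ} {P : ℕ → ℝ} (hP : isProb Ω P) :
    ∑' a : Ω, ENNReal.ofReal (P (a : ℕ)) = 1 := by
  rw [← ENNReal.ofReal_tsum_of_nonneg (fun a : Ω => hP.1 a a.2) hP.2.summable,
    hP.2.tsum_eq, ENNReal.ofReal_one]

theorem sum_len_le_one {Ω : Set ℕ} {P : ℕ → ℝ} (hP : isProb Ω P) :
    ∀ m : ℕ, ∑' γ : {γ : List ℕ // γ.length = m ∧ strIn Ω γ},
      ENNReal.ofReal (strP P (γ : List ℕ)) ≤ 1 := by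
  intro m
  induction m with
  | zero =>
    have he : ∀ b : {γ : List ℕ // γ.length = 0 ∧ strIn Ω γ},
        b = ⟨[], rfl, fun a ha => absurd ha List.not_mem_nil⟩ := by
      rintro ⟨γ, hγ, -⟩
      simp only [Subtype.mk.injEq]
      exact List.length_eq_zero_iff.1 hγ
    rw [tsum_eq_single (⟨[], rfl, fun a ha => absurd ha List.not_mem_nil⟩ :
      {γ : List ℕ // γ.length = 0 ∧ strIn Ω γ}) fun b hb => absurd (he b) hb]
    show ENNReal.ofReal (strP P []) ≤ 1
    rw [strP_nil]
    simp
  | succ m ih =>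
    have hne : ∀ γ : {γ : List ℕ // γ.length = m + 1 ∧ strIn Ω γ}, γ.1 ≠ [] := by
      intro γ h0
      have hl := γ.2.1
      rw [h0] at hl
      simp at hl
    set T := {γ : List ℕ // γ.length = m ∧ strIn Ω γ} with hT
    set j : {γ : List ℕ // γ.length = m + 1 ∧ strIn Ω γ} → Ω × T := fun γ =>
      (⟨γ.1.head!, γ.2.2 _ (List.head!_mem_self (hne γ))⟩,
       ⟨γ.1.tail, by simp [γ.2.1], fun a ha => γ.2.2 a (List.mem_of_mem_tail ha)⟩) with hjdef
    have hjinj : Function.Injective j := by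
      rintro γ γ' h
      have h1 : γ.1.head! = γ'.1.head! := congrArg (fun x => (x.1 : ℕ)) h
      have h2 : γ.1.tail = γ'.1.tail := congrArg (fun x => (x.2 : List ℕ)) h
      apply Subtype.ext
      rw [← List.cons_head!_tail (hne γ), ← List.cons_head!_tail (hne γ'), h1, h2]
    calc ∑' γ : {γ : List ℕ // γ.length = m + 1 ∧ strIn Ω γ}, ENNReal.ofReal (strP P γ.1)
        = ∑' γ : {γ : List ℕ // γ.length = m + 1 ∧ strIn Ω γ},
            (fun x : Ω × T => ENNReal.ofReal (P x.1) * ENNReal.ofReal (strP P x.2.1)) (j γ) := by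
          refine tsum_congr fun γ => ?_
          have hht := List.cons_head!_tail (hne γ)
          conv_lhs => rw [← hht]
          rw [strP_cons, ENNReal.ofReal_mul (hP.1 _ (γ.2.2 _ (List.head!_mem_self (hne γ))))]
      _ ≤ ∑' x : Ω × T, ENNReal.ofReal (P x.1) * ENNReal.ofReal (strP P x.2.1) :=
          ENNReal.tsum_comp_le_tsum_of_injective hjinj _
      _ = (∑' a : Ω, ENNReal.ofReal (P (a : ℕ))) * ∑' γ : T, ENNReal.ofReal (strP P γ.1) := by
          rw [ENNReal.tsum_prod']
          rw [tsum_congr fun a : Ω =>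
            (ENNReal.tsum_mul_left : ∑' b : T, ENNReal.ofReal (P (a : ℕ)) *
              ENNReal.ofReal (strP P b.1) = _)]
          rw [ENNReal.tsum_mul_right]
      _ ≤ 1 * 1 := mul_le_mul' (le_of_eq (tsum_omega hP)) ih
      _ = 1 := one_mul 1


theorem eq_of_map_fst_snd {α β : Type*} : ∀ {τ τ' : List (α × β)},
    τ.map Prod.fst = τ'.map Prod.fst → τ.map Prod.snd = τ'.map Prod.snd → τ = τ'
  | [], [], _, _ => rfl
  | [], _ :: _, h1, _ => by simp at h1
  | _ :: _, [], h1, _ => by simp at h1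
  | (a, b) :: l, (a', b') :: l', h1, h2 => by
    simp only [List.map_cons, List.cons.injEq] at h1 h2
    rw [eq_of_map_fst_snd h1.2 h2.2]
    simp [Prod.ext_iff, h1.1, h2.1]

theorem rein_congr {β : Type*} [Primcodable β] {O : ℕ → ℕ} {A B : Set β}
    (h : REIn O A) (e : A = B) : REIn O B := e ▸ h

/-- If the pair `α₁ × α₂` is Martin-Löf `(P₁ × P₂)`-random
relative to oracles `β₁,…,β_ℓ`, then the marginal `α₂` is Martin-Löf `P₂`-random
relative to `β₁,…,β_ℓ`. (No computability assumptions on `P₁`, `P₂`.) -/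
theorem stmt19 (Ω₁ Ω₂ : Set ℕ)
    (hre₁ : REPred (· ∈ Ω₁)) (hinf₁ : Ω₁.Infinite)
    (hre₂ : REPred (· ∈ Ω₂)) (hinf₂ : Ω₂.Infinite)
    (P₁ P₂ : ℕ → ℝ) (hP₁ : isProb Ω₁ P₁) (hP₂ : isProb Ω₂ P₂)
    (ℓ : ℕ) (Θ : Fin ℓ → Set ℕ)
    (hΘre : ∀ k, REPred (· ∈ Θ k)) (hΘinf : ∀ k, (Θ k).Infinite)
    (β : Fin ℓ → ℕ → ℕ) (hβ : ∀ k, seqIn (Θ k) (β k))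
    (α₁ α₂ : ℕ → ℕ) (hα₁ : seqIn Ω₁ α₁) (hα₂ : seqIn Ω₂ α₂)
    (hpair : MLRandomRel (Ω₁ ×ˢ Ω₂) (fun p => P₁ p.1 * P₂ p.2) (combineOracles β)
      (fun k => (α₁ k, α₂ k))) :
    MLRandomRel Ω₂ P₂ (combineOracles β) α₂ := by
  intro C hC
  have hCre := hC.1
  have hCstr := hC.2.1
  have hCsec := hC.2.2
  set D : Set (ℕ × List (ℕ × ℕ)) :=
    {x | (x.1, x.2.map Prod.snd) ∈ C ∧ ∀ a ∈ x.2.map Prod.fst, a ∈ Ω₁} with hD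
  -- r.e. of D
  have hm2snd : Primrec fun x : ℕ × List (ℕ × ℕ) => x.2.map Prod.snd :=
    Primrec.list_map Primrec.snd ((Primrec.snd.comp Primrec.snd).to₂)
  have hm2fst : Primrec fun x : ℕ × List (ℕ × ℕ) => x.2.map Prod.fst :=
    Primrec.list_map Primrec.snd ((Primrec.fst.comp Primrec.snd).to₂)
  have hmap1 : Computable fun x : ℕ × List (ℕ × ℕ) => (x.1, x.2.map Prod.snd) :=
    (Primrec.fst.pair hm2snd).to_comp
  have hmap2 : Computable fun x : ℕ × List (ℕ × ℕ) => x.2.map Prod.fst :=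
    hm2fst.to_comp
  have hDre : REIn (combineOracles β) D := by
    refine rein_congr (rein_inter (rein_comp hCre hmap1)
      (rein_of_re (rePred_comp (rePred_list_forall hre₁) hmap2))) ?_
    ext x
    simp [hD, Set.mem_setOf_eq]
  -- test conditions for D
  have hDtest : isTestSet (Ω₁ ×ˢ Ω₂) (fun p => P₁ p.1 * P₂ p.2) D := by
    constructor
    · rintro x ⟨hx1, hx2⟩ a ha
      refine Set.mem_prod.2 ⟨hx2 a.1 (List.mem_map_of_mem (f := Prod.fst) ha), ?_⟩
      exact hCstr _ hx1 a.2 (List.mem_map_of_mem (f := Prod.snd) ha)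
    · intro n hn
      obtain ⟨hpf, hmeas⟩ := hCsec n hn
      constructor
      · rintro σ ⟨hσ1, -⟩ τ ⟨hτ1, -⟩ hpre
        have h2 := hpf _ hσ1 _ hτ1 (hpre.map Prod.snd)
        have hlen : σ.length = τ.length := by
          have := congrArg List.length h2
          simpa using this
        exact hpre.eq_of_length hlen
      · -- measure bound
        set Cn := {σ | (n, σ) ∈ C} with hCn
        set Dn := {τ | (n, τ) ∈ D} with hDn
        refine lt_of_le_of_lt ?_ hmeas
        set S := (σ : ↥Cn) × {γ : List ℕ // γ.length = (σ : List ℕ).length ∧ strIn Ω₁ γ}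
          with hS
        set g : S → ℝ≥0∞ := fun s =>
          ENNReal.ofReal (strP P₁ s.2.1) * ENNReal.ofReal (strP P₂ (s.1 : List ℕ)) with hg
        have hmemD : ∀ τ : ↥Dn, ((n, (τ : List (ℕ × ℕ))) ∈ D) := fun τ => τ.2
        set j : ↥Dn → S := fun τ =>
          ⟨⟨(τ : List (ℕ × ℕ)).map Prod.snd, (hmemD τ).1⟩,
            ⟨(τ : List (ℕ × ℕ)).map Prod.fst, by simp, fun a ha => (hmemD τ).2 a ha⟩⟩
          with hj
        have hjinj : Function.Injective j := by
          intro τ τ' h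
          have h1 : (τ : List (ℕ × ℕ)).map Prod.fst = (τ' : List (ℕ × ℕ)).map Prod.fst :=
            congrArg (fun s : S => (s.2.1 : List ℕ)) h
          have h2 : (τ : List (ℕ × ℕ)).map Prod.snd = (τ' : List (ℕ × ℕ)).map Prod.snd :=
            congrArg (fun s : S => (s.1 : List ℕ)) h
          exact Subtype.ext (eq_of_map_fst_snd h1 h2)
        calc mOpen (fun p : ℕ × ℕ => P₁ p.1 * P₂ p.2) Dn
            = ∑' τ : ↥Dn, g (j τ) := by
              refine tsum_congr fun τ => ?_
              rw [hg, hj]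
              show ENNReal.ofReal (strP (fun p : ℕ × ℕ => P₁ p.1 * P₂ p.2) τ) = _
              rw [strP_prod, ENNReal.ofReal_mul
                (strP_nonneg hP₁.1 fun a ha => (hmemD τ).2 a ha)]
          _ ≤ ∑' s : S, g s := ENNReal.tsum_comp_le_tsum_of_injective hjinj g
          _ = ∑' σ : ↥Cn, ∑' γ : {γ : List ℕ //
                γ.length = (σ : List ℕ).length ∧ strIn Ω₁ γ}, g ⟨σ, γ⟩ :=
              ENNReal.tsum_sigma' g
          _ ≤ ∑' σ : ↥Cn, ENNReal.ofReal (strP P₂ (σ : List ℕ)) := by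
              refine ENNReal.tsum_le_tsum fun σ => ?_
              rw [hg]
              calc ∑' γ : {γ : List ℕ // γ.length = (σ : List ℕ).length ∧ strIn Ω₁ γ},
                    ENNReal.ofReal (strP P₁ γ.1) * ENNReal.ofReal (strP P₂ (σ : List ℕ))
                  = (∑' γ : {γ : List ℕ // γ.length = (σ : List ℕ).length ∧ strIn Ω₁ γ},
                      ENNReal.ofReal (strP P₁ γ.1)) *
                      ENNReal.ofReal (strP P₂ (σ : List ℕ)) := ENNReal.tsum_mul_right
                _ ≤ 1 * ENNReal.ofReal (strP P₂ (σ : List ℕ)) :=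
                    mul_le_mul_left (sum_len_le_one hP₁ _) _
                _ = ENNReal.ofReal (strP P₂ (σ : List ℕ)) := one_mul _
          _ = mOpen P₂ Cn := rfl
  -- apply pair randomness
  obtain ⟨n, hn1, hout⟩ := hpair D ⟨hDre, hDtest⟩
  refine ⟨n, hn1, fun hmem => hout ?_⟩
  obtain ⟨m, hm⟩ := hmem
  refine ⟨m, ?_, ?_⟩
  · show (n, (pre (fun k => (α₁ k, α₂ k)) m).map Prod.snd) ∈ C
    have hsnd : (pre (fun k => (α₁ k, α₂ k)) m).map Prod.snd = pre α₂ m := by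
      simp [pre, List.map_ofFn]
      rfl
    rw [hsnd]
    exact hm
  · intro a ha
    rw [pre, List.map_ofFn] at ha
    obtain ⟨i, rfl⟩ := List.mem_ofFn.1 ha
    exact hα₁ i
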